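/- For all real numbers a and b, the truncated double-well potential satisfies f(b) − f(a) − f'(a)·(b−a) ≤ (b−a)². -/

import Mathlib

/-- The truncated double-well potential. -/
noncomputable def doubleWell (φ : ℝ) : ℝ :=
  if φ < -1 then (φ + 1) ^ 2
  else if φ ≤ 1 then (1 / 4) * (φ ^ 2 - 1) ^ 2
  else (φ - 1) ^ 2

noncomputable def dwD (φ : ℝ) : ℝ :=
  if φ < -1 then 2 * (φ + 1)
  else if φ ≤ 1 then φ ^ 3 - φ
  else 2 * (φ - 1)

noncomputable def dwD2 (φ : ℝ) : ℝ :=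
  if φ < -1 then 2
  else if φ ≤ 1 then 3 * φ ^ 2 - 1
  else 2

lemma dw_eq_left {φ : ℝ} (h : φ ≤ -1) : doubleWell φ = (φ + 1) ^ 2 := by
  rcases lt_or_eq_of_le h with h | h
  · simp [doubleWell, h]
  · subst h; norm_num [doubleWell]

lemma dw_eq_mid {φ : ℝ} (h1 : -1 ≤ φ) (h2 : φ ≤ 1) :
    doubleWell φ = (1 / 4) * (φ ^ 2 - 1) ^ 2 := by
  simp [doubleWell, not_lt.mpr h1, h2]

lemma dw_eq_right {φ : ℝ} (h : 1 ≤ φ) : doubleWell φ = (φ - 1) ^ 2 := by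
  rcases lt_or_eq_of_le h with h | h
  · simp [doubleWell, not_lt.mpr (by linarith : (-1:ℝ) ≤ φ), not_le.mpr h]
  · subst h; norm_num [doubleWell]

lemma dwD_eq_left {φ : ℝ} (h : φ ≤ -1) : dwD φ = 2 * (φ + 1) := by
  rcases lt_or_eq_of_le h with h | h
  · simp [dwD, h]
  · subst h; norm_num [dwD]

lemma dwD_eq_mid {φ : ℝ} (h1 : -1 ≤ φ) (h2 : φ ≤ 1) : dwD φ = φ ^ 3 - φ := by
  simp [dwD, not_lt.mpr h1, h2]

lemma dwD_eq_right {φ : ℝ} (h : 1 ≤ φ) : dwD φ = 2 * (φ - 1) := by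
  rcases lt_or_eq_of_le h with h | h
  · simp [dwD, not_lt.mpr (by linarith : (-1:ℝ) ≤ φ), not_le.mpr h]
  · subst h; norm_num [dwD]

lemma hL : ∀ x : ℝ, HasDerivAt (fun φ : ℝ => (φ + 1) ^ 2) (2 * (x + 1)) x := by
  intro x
  have := (((hasDerivAt_id x).add_const 1).pow 2)
  refine this.congr_deriv ?_
  all_goals (push_cast [id_eq]; ring)

lemma hM : ∀ x : ℝ, HasDerivAt (fun φ : ℝ => (1 / 4) * (φ ^ 2 - 1) ^ 2) (x ^ 3 - x) x := by
  intro x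
  have := ((((hasDerivAt_pow 2 x).sub_const 1).pow 2).const_mul (1/4 : ℝ))
  refine this.congr_deriv ?_
  all_goals (push_cast [id_eq]; ring)

lemma hR : ∀ x : ℝ, HasDerivAt (fun φ : ℝ => (φ - 1) ^ 2) (2 * (x - 1)) x := by
  intro x
  have := (((hasDerivAt_id x).sub_const 1).pow 2)
  refine this.congr_deriv ?_
  all_goals (push_cast [id_eq]; ring)

lemma hML : ∀ x : ℝ, HasDerivAt (fun φ : ℝ => 2 * (φ + 1)) 2 x := by
  intro x
  have := (((hasDerivAt_id x).add_const 1).const_mul (2:ℝ))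
  refine this.congr_deriv ?_
  all_goals (push_cast [id_eq]; ring)

lemma hMM : ∀ x : ℝ, HasDerivAt (fun φ : ℝ => φ ^ 3 - φ) (3 * x ^ 2 - 1) x := by
  intro x
  have := ((hasDerivAt_pow 3 x).sub (hasDerivAt_id x))
  refine this.congr_deriv ?_
  all_goals (push_cast [id_eq]; ring)

lemma hMR : ∀ x : ℝ, HasDerivAt (fun φ : ℝ => 2 * (φ - 1)) 2 x := by
  intro x
  have := (((hasDerivAt_id x).sub_const 1).const_mul (2:ℝ))
  refine this.congr_deriv ?_
  all_goals (push_cast [id_eq]; ring)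

lemma glue {f fl fm fr : ℝ → ℝ} {dl dm dr : ℝ → ℝ}
    (hfl : ∀ x, HasDerivAt fl (dl x) x) (hfm : ∀ x, HasDerivAt fm (dm x) x)
    (hfr : ∀ x, HasDerivAt fr (dr x) x)
    (el : ∀ x ≤ (-1:ℝ), f x = fl x) (em : ∀ x, -1 ≤ x → x ≤ 1 → f x = fm x)
    (er : ∀ x, (1:ℝ) ≤ x → f x = fr x)
    (jl : dl (-1) = dm (-1)) (jr : dm 1 = dr 1)
    (d : ℝ → ℝ)
    (dll : ∀ x ≤ (-1:ℝ), d x = dl x) (dmm : ∀ x, -1 ≤ x → x ≤ 1 → d x = dm x)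
    (drr : ∀ x, (1:ℝ) ≤ x → d x = dr x) :
    ∀ x : ℝ, HasDerivAt f (d x) x := by
  intro x
  rcases lt_trichotomy x (-1) with h | h | h
  · have he : f =ᶠ[nhds x] fl := by
      filter_upwards [eventually_lt_nhds h] with y hy using el y hy.le
    rw [dll x h.le]
    exact (hfl x).congr_of_eventuallyEq he
  · subst h
    have h1 : HasDerivWithinAt f (dl (-1)) (Set.Iic (-1)) (-1) := by
      refine ((hfl (-1)).hasDerivWithinAt).congr (fun y hy => el y hy) (el _ le_rfl)
    have h2 : HasDerivWithinAt f (dl (-1)) (Set.Icc (-1) 1) (-1) := by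
      rw [jl]
      exact ((hfm (-1)).hasDerivWithinAt).congr (fun y hy => em y hy.1 hy.2)
        (em _ le_rfl (by norm_num))
    have h3 := h1.union h2
    have hs : Set.Iic (-1:ℝ) ∪ Set.Icc (-1) 1 = Set.Iic 1 :=
      Set.Iic_union_Icc_eq_Iic (by norm_num)
    rw [hs] at h3
    rw [dll _ le_rfl]
    exact h3.hasDerivAt (Iic_mem_nhds (by norm_num))
  · rcases lt_trichotomy x 1 with h1 | h1 | h1
    · have he : f =ᶠ[nhds x] fm := by
        filter_upwards [eventually_gt_nhds h, eventually_lt_nhds h1] with y hy hy'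
          using em y hy.le hy'.le
      rw [dmm x h.le h1.le]
      exact (hfm x).congr_of_eventuallyEq he
    · subst h1
      have h1 : HasDerivWithinAt f (dm 1) (Set.Icc (-1) 1) 1 := by
        exact ((hfm 1).hasDerivWithinAt).congr (fun y hy => em y hy.1 hy.2)
          (em _ (by norm_num) le_rfl)
      have h2 : HasDerivWithinAt f (dm 1) (Set.Ici 1) 1 := by
        rw [jr]
        exact ((hfr 1).hasDerivWithinAt).congr (fun y hy => er y hy) (er _ le_rfl)
      have h3 := h1.union h2
      have hs : Set.Icc (-1:ℝ) 1 ∪ Set.Ici 1 = Set.Ici (-1) :=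
        Set.Icc_union_Ici_eq_Ici (by norm_num)
      rw [hs] at h3
      rw [dmm _ (by norm_num) le_rfl]
      exact h3.hasDerivAt (Ici_mem_nhds (by norm_num))
    · have he : f =ᶠ[nhds x] fr := by
        filter_upwards [eventually_gt_nhds h1] with y hy using er y hy.le
      rw [drr x h1.le]
      exact (hfr x).congr_of_eventuallyEq he

lemma hasDerivAt_dw : ∀ x : ℝ, HasDerivAt doubleWell (dwD x) x := by
  refine glue hL hM hR (fun x h => dw_eq_left h) (fun x h h' => dw_eq_mid h h')
    (fun x h => dw_eq_right h) (by norm_num) (by norm_num) dwD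
    (fun x h => dwD_eq_left h) (fun x h h' => dwD_eq_mid h h') (fun x h => dwD_eq_right h)

lemma hasDerivAt_dwD : ∀ x : ℝ, HasDerivAt dwD (dwD2 x) x := by
  refine glue hML hMM hMR ?_ ?_ ?_ (by norm_num) (by norm_num) dwD2 ?_ ?_ ?_
  · exact fun x h => dwD_eq_left h
  · exact fun x h h' => dwD_eq_mid h h'
  · exact fun x h => dwD_eq_right h
  · intro x h; rcases lt_or_eq_of_le h with h | h
    · simp [dwD2, h]
    · subst h; norm_num [dwD2]
  · intro x h h'; simp [dwD2, not_lt.mpr h, h']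
  · intro x h; rcases lt_or_eq_of_le h with h | h
    · simp [dwD2, not_lt.mpr (by linarith : (-1:ℝ) ≤ x), not_le.mpr h]
    · subst h; norm_num [dwD2]

lemma dwD_lipschitz (x y : ℝ) : |dwD x - dwD y| ≤ 2 * |x - y| := by
  have hdiff : Differentiable ℝ dwD := fun x => (hasDerivAt_dwD x).differentiableAt
  have hbound : ∀ z : ℝ, ‖deriv dwD z‖₊ ≤ (2 : NNReal) := by
    intro z
    rw [← NNReal.coe_le_coe, coe_nnnorm, Real.norm_eq_abs, (hasDerivAt_dwD z).deriv]
    unfold dwD2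
    split_ifs with h1 h2
    · norm_num
    · rw [abs_le]; push_neg at h1; push_cast; constructor <;> nlinarith
    · norm_num
  have h := (lipschitzWith_of_nnnorm_deriv_le hdiff hbound).dist_le_mul x y
  simpa [Real.dist_eq] using h

/-- Second-order Taylor bound for the truncated double-well potential:
`f(b) − f(a) − f'(a)·(b−a) ≤ (b−a)²`. -/
theorem doubleWell_taylor_bound (a b : ℝ) :
    doubleWell b - doubleWell a - deriv doubleWell a * (b - a) ≤ (b - a) ^ 2 := by
  have hda : deriv doubleWell a = dwD a := (hasDerivAt_dw a).deriv
  rw [hda]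
  set g : ℝ → ℝ := fun t => doubleWell t - doubleWell a - dwD a * (t - a) - (t - a) ^ 2 with hg
  have hg' : ∀ t, HasDerivAt g (dwD t - dwD a - 2 * (t - a)) t := by
    intro t
    have h1 := (hasDerivAt_dw t).sub_const (doubleWell a)
    have h2 := ((hasDerivAt_id t).sub_const a).const_mul (dwD a)
    have h3 := ((hasDerivAt_id t).sub_const a).pow 2
    have := (h1.sub h2).sub h3
    refine this.congr_deriv ?_
    all_goals (push_cast [id_eq]; ring)
  have hga : g a = 0 := by simp [hg]
  have key : g b ≤ 0 := by
    rcases le_total a b with hab | hab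
    · have : AntitoneOn g (Set.Icc a b) := by
        apply antitoneOn_of_deriv_nonpos (convex_Icc a b)
          (fun t _ => (hg' t).continuousAt.continuousWithinAt)
          (fun t _ => ((hg' t).differentiableAt).differentiableWithinAt)
        intro t ht
        rw [(hg' t).deriv]
        rw [interior_Icc] at ht
        have h1 := dwD_lipschitz t a
        have h2 : |t - a| = t - a := abs_of_nonneg (by linarith [ht.1])
        rw [h2] at h1
        have := (abs_le.mp h1).2
        linarith
      calc g b ≤ g a := this (Set.left_mem_Icc.mpr hab) (Set.right_mem_Icc.mpr hab) hab
        _ = 0 := hga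
    · have : MonotoneOn g (Set.Icc b a) := by
        apply monotoneOn_of_deriv_nonneg (convex_Icc b a)
          (fun t _ => (hg' t).continuousAt.continuousWithinAt)
          (fun t _ => ((hg' t).differentiableAt).differentiableWithinAt)
        intro t ht
        rw [(hg' t).deriv]
        rw [interior_Icc] at ht
        have h1 := dwD_lipschitz t a
        have h2 : |t - a| = a - t := by
          rw [abs_sub_comm]; exact abs_of_nonneg (by linarith [ht.2])
        rw [h2] at h1
        have := (abs_le.mp h1).1
        linarith
      calc g b ≤ g a := this (Set.left_mem_Icc.mpr hab) (Set.right_mem_Icc.mpr hab) hab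
        _ = 0 := hga
  have : doubleWell b - doubleWell a - dwD a * (b - a) - (b - a) ^ 2 ≤ 0 := key
  linarith
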